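/- Let f(x,y,u) = y(y−1)/(x−y) and h(x,y,u) = (2xy − x − y)/(x−y)^2 be the data of the Gibbons–Tsarev system (33). Then the extension ∂_i v = g(p_i, u, v) ∂_i u with g(p,u,v) = 1/p^2 + v/p is compatible with this system: the expression E(x,y) = g_1(x,u,v)·f(y,x,u) + g_2(x,u,v) + g_3(x,u,v)·g(y,u,v) + g(x,u,v)·h(x,y,u) satisfies E(x,y) = E(y,x) for all distinct nonzero x, y and all u, v. -/

import Mathlib

/-- Partial derivative of `g(p,u,v)` in its first argument. -/
noncomputable def e1 (g : ℝ → ℝ → ℝ → ℝ) (p u v : ℝ) : ℝ := deriv (fun s => g s u v) p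
/-- Partial derivative of `g(p,u,v)` in its second argument. -/
noncomputable def e2 (g : ℝ → ℝ → ℝ → ℝ) (p u v : ℝ) : ℝ := deriv (fun s => g p s v) u
/-- Partial derivative of `g(p,u,v)` in its third argument. -/
noncomputable def e3 (g : ℝ → ℝ → ℝ → ℝ) (p u v : ℝ) : ℝ := deriv (fun s => g p u s) v

/-- The compatibility expression `E(x,y)` for an extension `∂ᵢv = g(pᵢ,u,v) ∂ᵢu` of a
one-field Gibbons–Tsarev system with data `f`, `h`. -/
noncomputable def extE (f h g : ℝ → ℝ → ℝ → ℝ) (x y u v : ℝ) : ℝ :=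
  e1 g x u v * f y x u + e2 g x u v + e3 g x u v * g y u v + g x u v * h x y u

lemma e1_calc (g : ℝ → ℝ → ℝ → ℝ) (hg : ∀ p u v : ℝ, g p u v = 1 / p ^ 2 + v / p)
    (p u v : ℝ) (hp : p ≠ 0) : e1 g p u v = -2 / p ^ 3 - v / p ^ 2 := by
  unfold e1
  have : (fun s => g s u v) = fun s : ℝ => (s ^ 2)⁻¹ + v * s⁻¹ := by
    funext s; rw [hg]; simp [one_div, div_eq_mul_inv]
  rw [this]
  have hA : HasDerivAt (fun s : ℝ => (s ^ 2)⁻¹)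
      (-(↑2 * p ^ 1) / (p ^ 2) ^ 2) p := (hasDerivAt_pow 2 p).inv (pow_ne_zero 2 hp)
  have hB : HasDerivAt (fun s : ℝ => v * s⁻¹) (v * (-(p ^ 2)⁻¹)) p :=
    (hasDerivAt_inv hp).const_mul v
  rw [(show HasDerivAt (fun s : ℝ => (s ^ 2)⁻¹ + v * s⁻¹) _ p from hA.add hB).deriv]
  field_simp
  ring

lemma e2_calc (g : ℝ → ℝ → ℝ → ℝ) (hg : ∀ p u v : ℝ, g p u v = 1 / p ^ 2 + v / p)
    (p u v : ℝ) : e2 g p u v = 0 := by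
  unfold e2
  have : (fun s => g p s v) = fun _ : ℝ => 1 / p ^ 2 + v / p := by funext s; rw [hg]
  rw [this, deriv_const]

lemma e3_calc (g : ℝ → ℝ → ℝ → ℝ) (hg : ∀ p u v : ℝ, g p u v = 1 / p ^ 2 + v / p)
    (p u v : ℝ) : e3 g p u v = 1 / p := by
  unfold e3
  have : (fun s => g p u s) = fun s : ℝ => (p ^ 2)⁻¹ + s * p⁻¹ := by
    funext s; rw [hg]; field_simp
  rw [this]
  have h : HasDerivAt (fun s : ℝ => (p ^ 2)⁻¹ + s * p⁻¹) p⁻¹ v := by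
    simpa using ((hasDerivAt_id v).mul_const p⁻¹).const_add ((p ^ 2)⁻¹ : ℝ)
  rw [h.deriv, one_div]

/-- for the Gibbons–Tsarev system (33) with `f(x,y,u) = y(y−1)/(x−y)`,
`h(x,y,u) = (2xy−x−y)/(x−y)²`, the extension `g(p,u,v) = 1/p² + v/p` is compatible:
`E(x,y) = E(y,x)` for distinct nonzero `x, y` and all `u, v`. -/
theorem stmt_4 (f h g : ℝ → ℝ → ℝ → ℝ)
    (hf : ∀ x y u : ℝ, f x y u = y * (y - 1) / (x - y))
    (hh : ∀ x y u : ℝ, h x y u = (2 * x * y - x - y) / (x - y) ^ 2)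
    (hg : ∀ p u v : ℝ, g p u v = 1 / p ^ 2 + v / p) :
    ∀ (x y u v : ℝ), x ≠ y → x ≠ 0 → y ≠ 0 →
      extE f h g x y u v = extE f h g y x u v := by
  intro x y u v hxy hx hy
  have hyx : y - x ≠ 0 := sub_ne_zero.mpr (Ne.symm hxy)
  have hxy' : x - y ≠ 0 := sub_ne_zero.mpr hxy
  unfold extE
  rw [e1_calc g hg x u v hx, e1_calc g hg y u v hy, e2_calc g hg, e2_calc g hg,
    e3_calc g hg, e3_calc g hg, hf, hf, hh, hh, hg, hg]
  field_simp
  ring
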